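/- Let A ⊆ F_q with q an odd prime power. Then max(|A+A|, |A·A|) ≥ 2|A|^2 / (q^{1/2} + √(q + 4|A|^3/q)). -/

import Mathlib

set_option maxHeartbeats 1000000

open Pointwise Finset
open scoped ComplexConjugate

namespace SumProdAux

set_option linter.unusedSectionVars false

variable {F : Type*} [Field F] [Fintype F] [DecidableEq F]

noncomputable def e (F : Type*) [Field F] [Fintype F] : AddChar F ℂ :=
  AddChar.FiniteField.primitiveChar_to_Complex F

lemma e_prim (F : Type*) [Field F] [Fintype F] : (e F).IsPrimitive :=
  AddChar.FiniteField.primitiveChar_to_Complex_isPrimitive F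

lemma ort (b : F) : ∑ t : F, e F (t * b) = if b = 0 then (Fintype.card F : ℂ) else 0 := by
  rw [AddChar.sum_mulShift b (e_prim F)]
  split_ifs <;> simp

lemma e_mul (x y : F) : e F x * e F y = e F (x + y) := (AddChar.map_add_eq_mul _ _ _).symm

lemma count_identity (P Q R S : Finset F) :
    ((Fintype.card F : ℂ)) * ((((P ×ˢ Q) ×ˢ R ×ˢ S).filter
        fun x : (F × F) × F × F => x.1.1 + x.1.2 = x.2.1 * x.2.2).card : ℂ)
    = ∑ t : F, (∑ p ∈ P, e F (t * p)) * (∑ q ∈ Q, e F (t * q))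
        * (∑ z ∈ R ×ˢ S, e F (-(t * (z.1 * z.2)))) := by
  have h1 : ∀ t : F, (∑ p ∈ P, e F (t * p)) * (∑ q ∈ Q, e F (t * q))
      * (∑ z ∈ R ×ˢ S, e F (-(t * (z.1 * z.2))))
      = ∑ x ∈ (P ×ˢ Q) ×ˢ R ×ˢ S, e F (t * (x.1.1 + x.1.2 - x.2.1 * x.2.2)) := by
    intro t
    rw [Finset.sum_mul_sum P Q, ← Finset.sum_product', Finset.sum_mul_sum (P ×ˢ Q) (R ×ˢ S),
      ← Finset.sum_product']
    refine Finset.sum_congr rfl fun x _ => ?_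
    rw [e_mul, e_mul]
    congr 1
    ring
  rw [Finset.sum_congr rfl fun t _ => h1 t, Finset.sum_comm]
  have h2 : ∀ x ∈ (P ×ˢ Q) ×ˢ R ×ˢ S,
      (∑ t : F, e F (t * (x.1.1 + x.1.2 - x.2.1 * x.2.2)))
      = if x.1.1 + x.1.2 = x.2.1 * x.2.2 then ((Fintype.card F : ℂ)) else 0 := by
    intro x _
    rw [ort]
    simp [sub_eq_zero]
  rw [Finset.sum_congr rfl h2, Finset.sum_ite, Finset.sum_const, Finset.sum_const_zero,
    add_zero, nsmul_eq_mul]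
  ring
lemma conj_e (x : F) : conj (e F x) = e F (-x) := by
  have hR : 0 < ringChar F := Nat.pos_of_ne_zero (CharP.ringChar_ne_zero_of_finite F)
  rw [AddChar.starComp_apply hR, AddChar.inv_apply]

lemma parseval_aux (c : F → F) (hc : ∀ y : F × F, c y.1 - c y.2 = 0 ↔ y.1 = y.2)
    (P : Finset F) :
    ∑ t : F, Complex.normSq (∑ p ∈ P, e F (t * c p)) = Fintype.card F * P.card := by
  have hC : ∑ t : F, ((∑ p ∈ P, e F (t * c p)) * conj (∑ p ∈ P, e F (t * c p)))
      = ((Fintype.card F : ℂ)) * P.card := by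
    have h1 : ∀ t : F, (∑ p ∈ P, e F (t * c p)) * conj (∑ p ∈ P, e F (t * c p))
        = ∑ y ∈ P ×ˢ P, e F (t * (c y.1 - c y.2)) := by
      intro t
      rw [map_sum, Finset.sum_mul_sum, Finset.sum_product]
      refine Finset.sum_congr rfl fun p _ => Finset.sum_congr rfl fun p' _ => ?_
      rw [conj_e, e_mul]
      congr 1
      ring
    simp_rw [h1]
    rw [Finset.sum_comm]
    have h2 : ∀ y ∈ P ×ˢ P, (∑ t : F, e F (t * (c y.1 - c y.2)))
        = if y.1 = y.2 then ((Fintype.card F : ℂ)) else 0 := by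
      intro y _
      rw [ort]
      simp [hc y]
    rw [Finset.sum_congr rfl h2, Finset.sum_ite, Finset.sum_const, Finset.sum_const_zero,
      add_zero, nsmul_eq_mul]
    rw [show ((P ×ˢ P).filter fun y : F × F => y.1 = y.2) = P.diag from Finset.diag_eq_filter.symm, Finset.diag_card]
    ring
  simp_rw [Complex.mul_conj] at hC
  exact_mod_cast hC

lemma parseval (P : Finset F) :
    ∑ t : F, Complex.normSq (∑ p ∈ P, e F (t * p)) = Fintype.card F * P.card :=
  parseval_aux id (by intro y; simp [sub_eq_zero]) P

lemma bilinear (u : F) (hu : u ≠ 0) (S : Finset F) :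
    ∑ r : F, Complex.normSq (∑ s ∈ S, e F (r * (u * s))) = Fintype.card F * S.card :=
  parseval_aux (fun s => u * s) (by intro y; simp [← mul_sub, hu, sub_eq_zero]) S


lemma master (P Q R S : Finset F) :
    (Fintype.card F : ℝ) * ((((P ×ˢ Q) ×ˢ R ×ˢ S).filter
        fun x : (F × F) × F × F => x.1.1 + x.1.2 = x.2.1 * x.2.2).card : ℝ)
    ≤ P.card * Q.card * R.card * S.card
      + Real.sqrt (Fintype.card F * R.card * S.card)
        * (Real.sqrt (P.card * (Fintype.card F - P.card))
          * Real.sqrt (Q.card * (Fintype.card F - Q.card))) := by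
  classical
  set κ : ℝ := (Fintype.card F : ℝ) with hκ
  set N : ℕ := (((P ×ˢ Q) ×ˢ R ×ˢ S).filter
      fun x : (F × F) × F × F => x.1.1 + x.1.2 = x.2.1 * x.2.2).card with hN
  set fP : F → ℂ := fun t => ∑ p ∈ P, e F (t * p) with hfP
  set fQ : F → ℂ := fun t => ∑ q ∈ Q, e F (t * q) with hfQ
  set K : F → ℂ := fun t => ∑ z ∈ R ×ˢ S, e F (-(t * (z.1 * z.2))) with hK
  have hid : ((Fintype.card F : ℂ)) * (N : ℂ) = ∑ t : F, fP t * fQ t * K t :=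
    count_identity P Q R S
  -- the zero term
  have h0 : fP 0 * fQ 0 * K 0 = ((P.card * Q.card * R.card * S.card : ℝ) : ℂ) := by
    simp [hfP, hfQ, hK, Finset.card_product]
    push_cast
    ring
  have hsplit : ((κ * N - P.card * Q.card * R.card * S.card : ℝ) : ℂ)
      = ∑ t ∈ Finset.univ.erase (0 : F), fP t * fQ t * K t := by
    rw [← Finset.add_sum_erase _ _ (Finset.mem_univ (0 : F))] at hid
    rw [h0] at hid
    rw [hκ]
    push_cast at hid ⊢
    linear_combination hid
  -- bound |K t| for t ≠ 0
  have hKbound : ∀ t : F, t ≠ 0 →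
      ‖K t‖ ≤ Real.sqrt (κ * R.card * S.card) := by
    intro t ht
    have hnest : K t = ∑ r ∈ R, ∑ s ∈ S, e F (r * (-t * s)) := by
      simp only [hK]
      rw [Finset.sum_product]
      refine Finset.sum_congr rfl fun r _ => Finset.sum_congr rfl fun s _ => ?_
      congr 1
      ring
    have h1 : ‖K t‖ ≤ ∑ r ∈ R, ‖∑ s ∈ S, e F (r * (-t * s))‖ := by
      rw [hnest]
      exact norm_sum_le _ _
    have h2 : (∑ r ∈ R, ‖∑ s ∈ S, e F (r * (-t * s))‖) ^ 2
        ≤ (R.card : ℝ) * ∑ r ∈ R, (‖∑ s ∈ S, e F (r * (-t * s))‖) ^ 2 := by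
      have := Finset.sum_mul_sq_le_sq_mul_sq R (fun _ => (1 : ℝ))
        (fun r => ‖∑ s ∈ S, e F (r * (-t * s))‖)
      simpa using this
    have h3 : ∑ r ∈ R, (‖∑ s ∈ S, e F (r * (-t * s))‖) ^ 2
        ≤ ∑ r : F, (‖∑ s ∈ S, e F (r * (-t * s))‖) ^ 2 :=
      Finset.sum_le_sum_of_subset_of_nonneg (Finset.subset_univ R)
        (fun _ _ _ => by positivity)
    have h4 : ∑ r : F, (‖∑ s ∈ S, e F (r * (-t * s))‖) ^ 2 = κ * S.card := by
      simp_rw [Complex.sq_norm]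
      exact bilinear (-t) (neg_ne_zero.mpr ht) S
    have habs : (‖K t‖) ^ 2 ≤ κ * R.card * S.card := by
      calc (‖K t‖) ^ 2
          ≤ (∑ r ∈ R, ‖∑ s ∈ S, e F (r * (-t * s))‖) ^ 2 := by
            apply pow_le_pow_left₀ (norm_nonneg _) h1
        _ ≤ (R.card : ℝ) * ∑ r ∈ R, (‖∑ s ∈ S, e F (r * (-t * s))‖) ^ 2 := h2
        _ ≤ (R.card : ℝ) * (κ * S.card) := by
            refine mul_le_mul_of_nonneg_left (h3.trans_eq h4) (by positivity)
        _ = κ * R.card * S.card := by ring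
    exact (Real.le_sqrt (norm_nonneg _) (by positivity)).mpr habs
  -- Parseval sums over erase 0
  have hPer : ∑ t ∈ Finset.univ.erase (0 : F), (‖fP t‖) ^ 2
      = P.card * (κ - P.card) := by
    rw [Finset.sum_erase_eq_sub (Finset.mem_univ (0 : F))]
    simp_rw [Complex.sq_norm]
    rw [parseval P]
    have : fP 0 = ((P.card : ℝ) : ℂ) := by simp [hfP]
    rw [this, Complex.normSq_ofReal]
    ring
  have hQer : ∑ t ∈ Finset.univ.erase (0 : F), (‖fQ t‖) ^ 2
      = Q.card * (κ - Q.card) := by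
    rw [Finset.sum_erase_eq_sub (Finset.mem_univ (0 : F))]
    simp_rw [Complex.sq_norm]
    rw [parseval Q]
    have : fQ 0 = ((Q.card : ℝ) : ℂ) := by simp [hfQ]
    rw [this, Complex.normSq_ofReal]
    ring
  -- assemble
  have herr : κ * N - P.card * Q.card * R.card * S.card
      ≤ Real.sqrt (κ * R.card * S.card)
        * (Real.sqrt (P.card * (κ - P.card)) * Real.sqrt (Q.card * (κ - Q.card))) := by
    have step1 : κ * N - P.card * Q.card * R.card * S.card
        ≤ ∑ t ∈ Finset.univ.erase (0 : F), ‖fP t * fQ t * K t‖ := by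
      calc κ * N - P.card * Q.card * R.card * S.card
          ≤ |κ * N - P.card * Q.card * R.card * S.card| := le_abs_self _
        _ = ‖((κ * N - P.card * Q.card * R.card * S.card : ℝ) : ℂ)‖ :=
            by rw [Complex.norm_real, Real.norm_eq_abs]
        _ = ‖∑ t ∈ Finset.univ.erase (0 : F), fP t * fQ t * K t‖ := by
            rw [hsplit]
        _ ≤ ∑ t ∈ Finset.univ.erase (0 : F), ‖fP t * fQ t * K t‖ :=
            norm_sum_le _ _
    have step2 : ∑ t ∈ Finset.univ.erase (0 : F), ‖fP t * fQ t * K t‖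
        ≤ Real.sqrt (κ * R.card * S.card)
          * ∑ t ∈ Finset.univ.erase (0 : F), ‖fP t‖ * ‖fQ t‖ := by
      rw [Finset.mul_sum]
      refine Finset.sum_le_sum fun t htmem => ?_
      have ht : t ≠ 0 := Finset.ne_of_mem_erase htmem
      rw [norm_mul, norm_mul]
      calc ‖fP t‖ * ‖fQ t‖ * ‖K t‖
          ≤ ‖fP t‖ * ‖fQ t‖ * Real.sqrt (κ * R.card * S.card) := by
            refine mul_le_mul_of_nonneg_left (hKbound t ht) (by positivity)
        _ = Real.sqrt (κ * R.card * S.card) * (‖fP t‖ * ‖fQ t‖) := by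
            ring
    have step3 : ∑ t ∈ Finset.univ.erase (0 : F), ‖fP t‖ * ‖fQ t‖
        ≤ Real.sqrt (P.card * (κ - P.card)) * Real.sqrt (Q.card * (κ - Q.card)) := by
      calc ∑ t ∈ Finset.univ.erase (0 : F), ‖fP t‖ * ‖fQ t‖
          ≤ Real.sqrt (∑ t ∈ Finset.univ.erase (0 : F), (‖fP t‖) ^ 2)
            * Real.sqrt (∑ t ∈ Finset.univ.erase (0 : F), (‖fQ t‖) ^ 2) :=
            Real.sum_mul_le_sqrt_mul_sqrt _ _ _
        _ = Real.sqrt (P.card * (κ - P.card)) * Real.sqrt (Q.card * (κ - Q.card)) := by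
            rw [hPer, hQer]
    calc κ * N - P.card * Q.card * R.card * S.card
        ≤ ∑ t ∈ Finset.univ.erase (0 : F), ‖fP t * fQ t * K t‖ := step1
      _ ≤ Real.sqrt (κ * R.card * S.card)
          * ∑ t ∈ Finset.univ.erase (0 : F), ‖fP t‖ * ‖fQ t‖ := step2
      _ ≤ Real.sqrt (κ * R.card * S.card)
          * (Real.sqrt (P.card * (κ - P.card)) * Real.sqrt (Q.card * (κ - Q.card))) := by
          refine mul_le_mul_of_nonneg_left step3 (Real.sqrt_nonneg _)
  linarith [herr]


lemma count_lb (A : Finset F) :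
    ((A.erase 0).card * ((A.card : ℝ) * A.card) : ℝ)
      ≤ (((((A + A) ×ˢ (-A)) ×ˢ (A * A) ×ˢ ((A.erase 0).image (·⁻¹))).filter
        fun x : (F × F) × F × F => x.1.1 + x.1.2 = x.2.1 * x.2.2).card : ℝ) := by
  have h : ((A.erase 0) ×ˢ A ×ˢ A).card
      ≤ (((((A + A) ×ˢ (-A)) ×ˢ (A * A) ×ˢ ((A.erase 0).image (·⁻¹))).filter
        fun x : (F × F) × F × F => x.1.1 + x.1.2 = x.2.1 * x.2.2).card) := by
    apply Finset.card_le_card_of_injOn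
      (fun z : F × F × F => ((z.2.1 + z.2.2, -z.2.2), (z.1 * z.2.1, z.1⁻¹)))
    · rintro ⟨a, b, c⟩ hz
      simp only [Finset.coe_product, Set.mem_prod, Finset.mem_coe] at hz
      obtain ⟨ha, hb, hc⟩ := hz
      have ha0 : a ≠ 0 := Finset.ne_of_mem_erase ha
      have haA : a ∈ A := Finset.mem_of_mem_erase ha
      simp only [Finset.coe_filter, Set.mem_setOf_eq, Finset.mem_product]
      refine ⟨⟨⟨Finset.add_mem_add hb hc, Finset.neg_mem_neg hc⟩,
        Finset.mul_mem_mul haA hb, Finset.mem_image.2 ⟨a, ha, rfl⟩⟩, ?_⟩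
      field_simp
      ring
    · rintro ⟨a, b, c⟩ hz ⟨a', b', c'⟩ hz' heq
      simp only [Finset.coe_product, Set.mem_prod, Finset.mem_coe] at hz hz'
      have ha0 : a ≠ 0 := Finset.ne_of_mem_erase hz.1
      simp only [Prod.mk.injEq] at heq
      obtain ⟨⟨h1, h2⟩, h3, h4⟩ := heq
      have haa : a = a' := inv_injective h4
      have hcc : c = c' := neg_injective h2
      subst haa
      have hbb : b = b' := mul_left_cancel₀ ha0 h3
      simp [hbb, hcc]
  calc ((A.erase 0).card * ((A.card : ℝ) * A.card) : ℝ)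
      = (((A.erase 0) ×ˢ A ×ˢ A).card : ℝ) := by
        push_cast [Finset.card_product]
        ring
    _ ≤ _ := by exact_mod_cast h

lemma endgame (κ t t' P R M : ℝ)
    (hκ3 : 3 ≤ κ) (ht0 : 0 ≤ t) (ht2 : 2 ≤ t) (htκ : t ≤ κ) (htP : t ≤ P) (hPκ : P ≤ κ)
    (hPM : P ≤ M) (hRM : R ≤ M) (hR0 : 0 ≤ R)
    (hcase : Real.sqrt κ < t) (ht'low : t - 1 ≤ t') (ht'le : t' ≤ t)
    (hm : κ * (t' * (t * t)) ≤ P * t * R * t'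
      + Real.sqrt (κ * R * t') * (Real.sqrt (P * (κ - P)) * Real.sqrt (t * (κ - t)))) :
    2 * t ^ 2 ≤ M * (Real.sqrt κ + Real.sqrt (κ + 4 * t ^ 3 / κ)) := by
  have hκpos : (0 : ℝ) < κ := by linarith
  have hκne : κ ≠ 0 := ne_of_gt hκpos
  have hsqκ : (0 : ℝ) < Real.sqrt κ := Real.sqrt_pos.mpr hκpos
  have ht3 : (0:ℝ) ≤ 4 * t ^ 3 / κ := div_nonneg (by positivity) hκpos.le
  have hM0 : 0 ≤ M := by linarith
  have htM : t ≤ M := htP.trans hPM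
  have hκt2 : κ ≤ t ^ 2 := by
    nlinarith [mul_self_lt_mul_self (Real.sqrt_nonneg κ) hcase, Real.sq_sqrt hκpos.le]
  have ht'pos : 0 < t' := by linarith
  set D : ℝ := Real.sqrt (κ + 4 * t ^ 3 / κ) with hDdef
  have hD : Real.sqrt κ ≤ D := by
    apply Real.sqrt_le_sqrt
    linarith
  -- bound main term
  have hmain : P * t * R * t' ≤ M ^ 2 * (t * t') := by
    nlinarith [mul_le_mul_of_nonneg_right (mul_le_mul hPM hRM hR0 hM0)
      (mul_nonneg ht0 ht'pos.le)]
  -- bound error term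
  have hsq1 : Real.sqrt (κ * R * t') ≤ Real.sqrt (κ * M * t') := by
    apply Real.sqrt_le_sqrt
    exact mul_le_mul_of_nonneg_right (mul_le_mul_of_nonneg_left hRM hκpos.le) ht'pos.le
  have hsq2 : Real.sqrt (P * (κ - P)) ≤ Real.sqrt (M * (κ - t)) := by
    apply Real.sqrt_le_sqrt
    exact mul_le_mul hPM (by linarith) (by linarith) hM0
  have hsqnn : ∀ x : ℝ, 0 ≤ Real.sqrt x := Real.sqrt_nonneg
  have herr1 : Real.sqrt (κ * R * t') * (Real.sqrt (P * (κ - P)) * Real.sqrt (t * (κ - t)))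
      ≤ Real.sqrt (κ * M * t') * (Real.sqrt (M * (κ - t)) * Real.sqrt (t * (κ - t))) := by
    apply mul_le_mul hsq1
    · exact mul_le_mul_of_nonneg_right hsq2 (hsqnn _)
    · exact mul_nonneg (hsqnn _) (hsqnn _)
    · exact hsqnn _
  have hmerge : Real.sqrt (κ * M * t') * (Real.sqrt (M * (κ - t)) * Real.sqrt (t * (κ - t)))
      = M * (κ - t) * Real.sqrt (κ * (t * t')) := by
    rw [← Real.sqrt_mul (mul_nonneg hM0 (by linarith : (0:ℝ) ≤ κ - t)),
      ← Real.sqrt_mul (mul_nonneg (mul_nonneg hκpos.le hM0) ht'pos.le)]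
    rw [show κ * M * t' * (M * (κ - t) * (t * (κ - t)))
        = (M * (κ - t)) ^ 2 * (κ * (t * t')) by ring]
    rw [Real.sqrt_mul (sq_nonneg _), Real.sqrt_sq (by nlinarith [hM0, htκ])]
  have hcore : t * (κ - t) ^ 2 ≤ κ ^ 2 * t' := by
    nlinarith [mul_nonneg (sub_nonneg.mpr hκt2) (by linarith : (0:ℝ) ≤ 2 * κ - t),
      mul_nonneg hκpos.le (sub_nonneg.mpr htκ), ht'low, ht0]
  have hkey : (κ - t) * Real.sqrt (κ * (t * t')) ≤ κ * t' * Real.sqrt κ := by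
    have lhs_eq : (κ - t) * Real.sqrt (κ * (t * t'))
        = Real.sqrt ((κ - t) ^ 2 * (κ * (t * t'))) := by
      rw [Real.sqrt_mul (sq_nonneg _), Real.sqrt_sq (by linarith)]
    have rhs_eq : κ * t' * Real.sqrt κ = Real.sqrt ((κ * t') ^ 2 * κ) := by
      rw [Real.sqrt_mul (sq_nonneg _), Real.sqrt_sq (mul_nonneg hκpos.le ht'pos.le)]
    rw [lhs_eq, rhs_eq]
    apply Real.sqrt_le_sqrt
    nlinarith [mul_le_mul_of_nonneg_left hcore (mul_nonneg hκpos.le ht'pos.le)]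
  have herr2 : Real.sqrt (κ * R * t') * (Real.sqrt (P * (κ - P)) * Real.sqrt (t * (κ - t)))
      ≤ M * (κ * t' * Real.sqrt κ) := by
    calc Real.sqrt (κ * R * t') * (Real.sqrt (P * (κ - P)) * Real.sqrt (t * (κ - t)))
        ≤ Real.sqrt (κ * M * t') * (Real.sqrt (M * (κ - t)) * Real.sqrt (t * (κ - t))) := herr1
      _ = M * ((κ - t) * Real.sqrt (κ * (t * t'))) := by rw [hmerge]; ring
      _ ≤ M * (κ * t' * Real.sqrt κ) := mul_le_mul_of_nonneg_left hkey hM0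
  have h2 : κ * (t' * (t * t)) ≤ M ^ 2 * (t * t') + M * (κ * t' * Real.sqrt κ) := by
    linarith [hm, hmain, herr2]
  have hstar : t ^ 2 ≤ M ^ 2 * t / κ + M * Real.sqrt κ := by
    have hexp : κ * t' * (M ^ 2 * t / κ + M * Real.sqrt κ)
        = M ^ 2 * (t * t') + M * (κ * t' * Real.sqrt κ) := by
      field_simp
    exact le_of_mul_le_mul_left
      (by rw [hexp]; nlinarith [h2] :
        κ * t' * t ^ 2 ≤ κ * t' * (M ^ 2 * t / κ + M * Real.sqrt κ))
      (mul_pos hκpos ht'pos)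
  have hsκsq : Real.sqrt κ ^ 2 = κ := Real.sq_sqrt hκpos.le
  by_cases hc2 : t ^ 2 ≤ M * Real.sqrt κ
  · have : M * Real.sqrt κ ≤ M * D := mul_le_mul_of_nonneg_left hD hM0
    nlinarith [this, hc2]
  · push_neg at hc2
    have hlhs0 : 0 ≤ 2 * t ^ 2 - M * Real.sqrt κ := by nlinarith [hc2, sq_nonneg t]
    have hMD : 2 * t ^ 2 - M * Real.sqrt κ ≤ M * D := by
      have hMD_eq : M * D = Real.sqrt (M ^ 2 * (κ + 4 * t ^ 3 / κ)) := by
        rw [Real.sqrt_mul (sq_nonneg _), Real.sqrt_sq hM0]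
      rw [hMD_eq, Real.le_sqrt hlhs0 (mul_nonneg (sq_nonneg M) (by linarith))]
      have hdiv : M ^ 2 * (κ + 4 * t ^ 3 / κ) = M ^ 2 * κ + 4 * t ^ 2 * (M ^ 2 * t / κ) := by
        field_simp
      rw [hdiv]
      nlinarith [mul_le_mul_of_nonneg_left hstar (by positivity : (0:ℝ) ≤ 4 * t ^ 2),
        mul_le_mul_of_nonneg_left hsκsq.le (sq_nonneg M),
        mul_le_mul_of_nonneg_left hsκsq.ge (sq_nonneg M)]
    nlinarith [hMD]

end SumProdAux

open SumProdAux in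
/-- Sum-product lower bound:
`max(|A+A|, |A·A|) ≥ 2|A|² / (q^{1/2} + √(q + 4|A|³/q))`. -/
theorem sum_product_lower_bound {F : Type*} [Field F] [Fintype F] [DecidableEq F]
    (q : ℕ) (hq : Fintype.card F = q) (hodd : Odd q) (A : Finset F) :
    2 * (A.card : ℝ) ^ 2 / (Real.sqrt q + Real.sqrt (q + 4 * (A.card : ℝ) ^ 3 / q))
      ≤ max ((A + A).card : ℝ) ((A * A).card : ℝ) := by
  subst hq
  have hκ3 : (3 : ℝ) ≤ (Fintype.card F : ℝ) := by
    have h2 : 1 < Fintype.card F := Fintype.one_lt_card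
    have hne : Fintype.card F ≠ 2 := by
      intro h
      rw [h] at hodd
      exact (by decide : ¬ Odd 2) hodd
    have h3 : 3 ≤ Fintype.card F := by omega
    exact_mod_cast h3
  have hκpos : (0 : ℝ) < (Fintype.card F : ℝ) := by linarith
  have hsqκ : (0 : ℝ) < Real.sqrt (Fintype.card F) := Real.sqrt_pos.mpr hκpos
  have hD0 : (0 : ℝ)
      ≤ Real.sqrt ((Fintype.card F : ℝ) + 4 * (A.card : ℝ) ^ 3 / (Fintype.card F : ℝ)) :=
    Real.sqrt_nonneg _
  have hden : (0 : ℝ) < Real.sqrt (Fintype.card F)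
      + Real.sqrt ((Fintype.card F : ℝ) + 4 * (A.card : ℝ) ^ 3 / (Fintype.card F : ℝ)) := by
    linarith
  rw [div_le_iff₀ hden]
  rcases A.eq_empty_or_nonempty with hA | hA
  · have hA0 : ((A.card : ℝ)) = 0 := by rw [hA]; simp
    have hmax : (0 : ℝ) ≤ max ((A + A).card : ℝ) ((A * A).card : ℝ) := by positivity
    have hL : 2 * ((A.card : ℝ)) ^ 2 = 0 := by rw [hA0]; ring
    rw [hL]
    exact mul_nonneg hmax hden.le
  · have ht0 : (0 : ℝ) ≤ (A.card : ℝ) := Nat.cast_nonneg _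
    have htκ : (A.card : ℝ) ≤ (Fintype.card F : ℝ) := by
      exact_mod_cast Finset.card_le_univ A
    have htP : (A.card : ℝ) ≤ ((A + A).card : ℝ) := by
      exact_mod_cast Finset.card_le_card_add_right hA
    have hPκ : ((A + A).card : ℝ) ≤ (Fintype.card F : ℝ) := by
      exact_mod_cast Finset.card_le_univ (A + A)
    have hR0 : (0 : ℝ) ≤ ((A * A).card : ℝ) := Nat.cast_nonneg _
    have hPM : ((A + A).card : ℝ) ≤ max ((A + A).card : ℝ) ((A * A).card : ℝ) :=
      le_max_left _ _
    have hRM : ((A * A).card : ℝ) ≤ max ((A + A).card : ℝ) ((A * A).card : ℝ) :=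
      le_max_right _ _
    by_cases hcase : (A.card : ℝ) ≤ Real.sqrt (Fintype.card F)
    · -- trivial regime
      have hD : Real.sqrt (Fintype.card F)
          ≤ Real.sqrt ((Fintype.card F : ℝ) + 4 * (A.card : ℝ) ^ 3 / (Fintype.card F : ℝ)) := by
        apply Real.sqrt_le_sqrt
        have : (0:ℝ) ≤ 4 * (A.card : ℝ) ^ 3 / (Fintype.card F : ℝ) := by positivity
        linarith
      have htM : (A.card : ℝ) ≤ max ((A + A).card : ℝ) ((A * A).card : ℝ) := htP.trans hPM
      nlinarith [mul_le_mul_of_nonneg_left (by linarith [hcase, hD] :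
          2 * (A.card : ℝ) ≤ Real.sqrt (Fintype.card F)
            + Real.sqrt ((Fintype.card F : ℝ) + 4 * (A.card : ℝ) ^ 3 / (Fintype.card F : ℝ)))
          ht0,
        mul_le_mul_of_nonneg_right htM hden.le]
    · push_neg at hcase
      have h1κ : (1 : ℝ) < Real.sqrt (Fintype.card F) := by
        rw [show (1:ℝ) = Real.sqrt 1 by simp]
        exact Real.sqrt_lt_sqrt (by norm_num) (by linarith)
      have ht2 : (2 : ℝ) ≤ (A.card : ℝ) := by
        have h1t : (1 : ℝ) < (A.card : ℝ) := lt_trans h1κ hcase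
        have : 1 < A.card := by exact_mod_cast h1t
        have : 2 ≤ A.card := this
        exact_mod_cast this
      have ht2n : 2 ≤ A.card := by exact_mod_cast ht2
      have ht'low : (A.card : ℝ) - 1 ≤ ((A.erase (0:F)).card : ℝ) := by
        have h := Finset.pred_card_le_card_erase (s := A) (a := (0 : F))
        have h' := Nat.cast_le (α := ℝ) |>.mpr h
        rwa [Nat.cast_sub (by omega), Nat.cast_one] at h'
      have ht'le : ((A.erase (0:F)).card : ℝ) ≤ (A.card : ℝ) := by
        exact_mod_cast Finset.card_erase_le
      have hmaster := master (A + A) (-A) (A * A) ((A.erase (0:F)).image (·⁻¹))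
      rw [Finset.card_neg, Finset.card_image_of_injective _ inv_injective] at hmaster
      have hlb := count_lb A
      have hm := (mul_le_mul_of_nonneg_left hlb hκpos.le).trans hmaster
      exact endgame (Fintype.card F) (A.card) ((A.erase (0:F)).card) ((A + A).card)
        ((A * A).card) (max ((A + A).card : ℝ) ((A * A).card : ℝ))
        hκ3 ht0 ht2 htκ htP hPκ hPM hRM hR0 hcase ht'low ht'le hm
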